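/- Let K be a totally real number field whose degree n over ℚ is a prime number. Then there exists an algebraic integer α with K = ℚ(α) and H(α) ≤ 2ⁿ · √|D_K|. -/

import Mathlib

open NumberField IntermediateField Polynomial

/-- The height of an integer polynomial: the maximum of the absolute values of its
coefficients. -/
noncomputable def polyHeight (f : Polynomial ℤ) : ℕ :=
  f.support.sup fun i => (f.coeff i).natAbs

private lemma choose_le_two_pow_aux : ∀ (m k : ℕ), (m + 1).choose k ≤ 2 ^ m := by
  intro m
  induction m with
  | zero =>
    intro k
    match k with
    | 0 => simp
    | 1 => simp
    | (k+2) => rw [Nat.choose_eq_zero_of_lt (by omega)]; positivity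
  | succ m ih =>
    intro k
    match k with
    | 0 => simpa using Nat.one_le_two_pow
    | (k+1) =>
      rw [Nat.choose_succ_succ]
      calc (m+1).choose k + (m+1).choose (k+1) ≤ 2^m + 2^m := Nat.add_le_add (ih k) (ih (k+1))
        _ = 2^(m+1) := by ring

open NumberField.InfinitePlace NumberField.mixedEmbedding

/-- Let `K` be a totally real number field whose degree `n` over `ℚ` is
prime. Then there is an algebraic integer `α` with `K = ℚ(α)` and
`H(α) ≤ 2ⁿ·√|D_K|`, where `H(α)` is the height of the (monic, integral) minimal
polynomial of `α`. -/
theorem totally_real_prime_degree_small_generator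
    (K : Type*) [Field K] [NumberField K]
    (n : ℕ) (hn : Module.finrank ℚ K = n) (hnp : n.Prime)
    (htr : ∀ φ : K →+* ℂ, NumberField.ComplexEmbedding.IsReal φ) :
    ∃ α : K, IsIntegral ℤ α ∧ ℚ⟮α⟯ = ⊤ ∧
      (polyHeight (minpoly ℤ α) : ℝ) ≤
        2 ^ n * Real.sqrt |(NumberField.discr K : ℝ)| := by
  classical
  have hn2 : 2 ≤ n := hnp.two_le
  have hcplx : nrComplexPlaces K = 0 := by
    rw [Fintype.card_eq_zero_iff]
    exact ⟨fun ⟨w, hw⟩ => (isComplex_iff.mp hw) (htr _)⟩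
  have hrank := card_add_two_mul_card_eq_rank K
  have hreal : nrRealPlaces K = n := by omega
  have hcard : Fintype.card (InfinitePlace K) = n := by
    rw [card_eq_nrRealPlaces_add_nrComplexPlaces, hreal, hcplx]
    omega
  have hmult : ∀ w : InfinitePlace K, mult w = 1 := fun w => by
    rw [mult, if_pos (isReal_iff.mpr (htr _))]
  have hne : Nonempty (InfinitePlace K) := by
    rw [← Fintype.card_pos_iff, hcard]; omega
  obtain ⟨w₀⟩ := hne
  set s : NNReal := NNReal.sqrt ‖NumberField.discr K‖₊ with hs_def
  have hs1 : 1 ≤ s := by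
    rw [hs_def, ← NNReal.sqrt_one]
    apply NNReal.sqrt_le_sqrt.mpr
    rw [← NNReal.coe_le_coe, coe_nnnorm, NNReal.coe_one, Int.norm_eq_abs]
    exact_mod_cast Int.one_le_abs (discr_ne_zero K)
  set B : NNReal := (2 * s) ^ (((n - 1 : ℕ) : ℝ)⁻¹) with hB_def
  have hn1 : ((n - 1 : ℕ) : ℝ) ≠ 0 := by
    have : n - 1 ≠ 0 := by omega
    exact_mod_cast this
  have hBpow : B ^ (n - 1) = 2 * s := by
    rw [hB_def, ← NNReal.rpow_natCast _ (n-1), ← NNReal.rpow_mul, inv_mul_cancel₀ hn1,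
      NNReal.rpow_one]
  have h2s : (1:NNReal) ≤ 2 * s := le_trans hs1 (le_mul_of_one_le_left (zero_le : 0 ≤ s) one_le_two)
  have hB1 : 1 ≤ B := by
    by_contra h
    push_neg at h
    have hlt : B ^ (n - 1) < 1 := pow_lt_one₀ (zero_le : 0 ≤ B) h (by omega)
    rw [hBpow] at hlt
    exact absurd h2s (not_le.mpr hlt)
  set f : InfinitePlace K → NNReal := fun w => if w = w₀ then 1 else B with hf_def
  have hprod : ∏ w : InfinitePlace K, f w ^ mult w = 2 * s := by
    simp_rw [hmult, pow_one]
    rw [hf_def, ← Finset.prod_erase_mul _ _ (Finset.mem_univ w₀), if_pos rfl, mul_one]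
    rw [Finset.prod_congr rfl (fun w hw => if_neg (Finset.ne_of_mem_erase hw)),
      Finset.prod_const, Finset.card_erase_of_mem (Finset.mem_univ w₀), Finset.card_univ, hcard,
      hBpow]
  have hvol : minkowskiBound K ↑1 < MeasureTheory.volume (convexBodyLT K f) := by
    rw [convexBodyLT_volume, minkowskiBound, volume_fundamentalDomain_fractionalIdealLatticeBasis,
      Units.val_one, FractionalIdeal.absNorm_one, Rat.cast_one, ENNReal.ofReal_one, one_mul,
      mixedEmbedding.finrank, volume_fundamentalDomain_latticeBasis, hcplx, hn]
    have h1 : (convexBodyLTFactor K : ENNReal) = 2 ^ n := by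
      rw [convexBodyLTFactor, hreal, hcplx]
      push_cast
      simp
    rw [h1, hprod]
    simp only [pow_zero, one_mul]
    calc (NNReal.sqrt ‖NumberField.discr K‖₊ : ENNReal) * 2 ^ n
        = 2 ^ n * ((s : NNReal) : ENNReal) := by rw [mul_comm]
      _ < 2 ^ n * ((2 * s : NNReal) : ENNReal) := by
          refine ENNReal.mul_lt_mul_right (by norm_num) (by norm_num) ?_
          rw [ENNReal.coe_lt_coe]
          exact lt_mul_of_one_lt_left (lt_of_lt_of_le one_pos hs1) one_lt_two
  obtain ⟨a, ha0, haf⟩ := exists_ne_zero_mem_ringOfIntegers_lt K hvol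
  set α : K := (a : K) with hα_def
  have hint : IsIntegral ℤ α := RingOfIntegers.isIntegral_coe a
  have hα0 : α ≠ 0 := RingOfIntegers.coe_ne_zero_iff.mpr ha0
  have hw₀ : w₀ α < 1 := by simpa [hf_def] using haf w₀
  have hwB : ∀ w : InfinitePlace K, w α < B := fun w => by
    refine lt_of_lt_of_le (haf w) ?_
    rw [hf_def]
    simp only []
    split_ifs
    · exact_mod_cast hB1
    · exact le_refl _
  -- primitivity
  have hintQ : IsIntegral ℚ α := IsIntegral.of_finite ℚ α
  have hdvd : (minpoly ℚ α).natDegree ∣ n := by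
    refine ⟨Module.finrank (↥ℚ⟮α⟯) K, ?_⟩
    rw [← IntermediateField.adjoin.finrank hintQ, Module.finrank_mul_finrank, hn]
  have htop : ℚ⟮α⟯ = ⊤ := by
    rcases hnp.eq_one_or_self_of_dvd _ hdvd with h1 | hdeg
    · exfalso
      obtain ⟨q, hq⟩ := minpoly.natDegree_eq_one_iff.mp h1
      have hqint : IsIntegral ℤ q := by
        rw [← isIntegral_algebraMap_iff (algebraMap ℚ K).injective, hq]
        exact hint
      obtain ⟨m, hm⟩ := IsIntegrallyClosed.isIntegral_iff.mp hqint
      have hm0 : m ≠ 0 := by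
        rintro rfl
        apply hα0
        rw [← hq, ← hm]
        simp
      have hαm : α = ((m : ℤ) : K) := by rw [← hq, ← hm]; simp
      have : (1:ℝ) ≤ w₀ α := by
        rw [hαm, ← InfinitePlace.mk_embedding w₀, InfinitePlace.apply, map_intCast]
        rw [Complex.norm_intCast]
        exact_mod_cast Int.one_le_abs hm0
      exact absurd hw₀ (not_lt.mpr this)
    · exact (Field.primitive_element_iff_minpoly_natDegree_eq ℚ α).mpr (by rw [hdeg, hn])
  -- the minimal polynomial and its roots
  set p : Polynomial ℚ := minpoly ℚ α with hp_def
  have hpmo : p.Monic := minpoly.monic hintQ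
  have hpdeg : p.natDegree = n := by
    rw [hp_def, (Field.primitive_element_iff_minpoly_natDegree_eq ℚ α).mp htop, hn]
  set P : Polynomial ℂ := p.map (algebraMap ℚ ℂ) with hP_def
  have hP0 : P ≠ 0 :=
    (Polynomial.map_ne_zero_iff (algebraMap ℚ ℂ).injective).mpr (minpoly.ne_zero hintQ)
  set R := P.roots with hR_def
  have hcardR : Multiset.card R = n := by
    rw [hR_def, Polynomial.splits_iff_card_roots.mp (IsAlgClosed.splits P),
      hP_def, Polynomial.natDegree_map, hpdeg]
  have hroots_le : ∀ z ∈ R, ‖z‖ ≤ (B:ℝ) := by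
    intro z hz
    have hzset : z ∈ p.rootSet ℂ := by
      rw [Polynomial.mem_rootSet']
      refine ⟨hP0, ?_⟩
      have h := Polynomial.isRoot_of_mem_roots hz
      rw [Polynomial.IsRoot] at h
      rw [Polynomial.aeval_def, ← Polynomial.eval_map]
      exact h
    rw [hp_def, ← NumberField.Embeddings.range_eval_eq_rootSet_minpoly K ℂ α] at hzset
    obtain ⟨φ, rfl⟩ := hzset
    have h := hwB (InfinitePlace.mk φ)
    rw [InfinitePlace.apply] at h
    exact le_of_lt h
  set z₀ : ℂ := (InfinitePlace.embedding w₀) α with hz₀_def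
  have hz₀norm : ‖z₀‖ ≤ 1 := by
    have h := hw₀
    rw [← InfinitePlace.mk_embedding w₀, InfinitePlace.apply] at h
    exact le_of_lt h
  have hz₀R : z₀ ∈ R := by
    rw [hR_def, Polynomial.mem_roots hP0]
    have h := Polynomial.aeval_algHom_apply
      (RingHom.toRatAlgHom (InfinitePlace.embedding w₀)) α p
    rw [minpoly.aeval, map_zero] at h
    rw [Polynomial.IsRoot, hP_def, Polynomial.eval_map, ← Polynomial.aeval_def]
    exact h
  -- factor out the small root
  set q : Polynomial ℂ := ((R.erase z₀).map fun z => Polynomial.X - Polynomial.C z).prod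
    with hq_def
  have hq_monic : q.Monic :=
    Polynomial.monic_multiset_prod_of_monic _ _ (fun z _ => Polynomial.monic_X_sub_C z)
  have hq_deg : q.natDegree = n - 1 := by
    rw [hq_def, Polynomial.natDegree_multiset_prod_X_sub_C_eq_card,
      Multiset.card_erase_of_mem hz₀R, hcardR]
    exact Nat.pred_eq_sub_one
  have hq_roots : q.roots = R.erase z₀ := Polynomial.roots_multiset_prod_X_sub_C _
  have hPfact : P = (Polynomial.X - Polynomial.C z₀) * q := by
    conv_lhs => rw [hP_def, Polynomial.Splits.eq_prod_roots_of_monic (IsAlgClosed.splits _)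
      (hpmo.map _)]
    rw [← hP_def, ← hR_def, ← Multiset.cons_erase hz₀R, Multiset.map_cons, Multiset.prod_cons,
      hq_def]
  -- bound the coefficients of q
  have hchoose : ((n-1).choose ((n-1)/2) : ℝ) ≤ 2 ^ (n - 2) := by
    have h := choose_le_two_pow_aux (n-2) ((n-1)/2)
    have he : n - 2 + 1 = n - 1 := by omega
    rw [he] at h
    exact_mod_cast h
  have hqc : ∀ j, ‖q.coeff j‖ ≤ 2 * (s:ℝ) * 2 ^ (n - 2) := by
    intro j
    have h := Polynomial.coeff_bdd_of_roots_le (RingHom.id ℂ) hq_monic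
      (IsAlgClosed.splits _) (le_of_eq hq_deg)
      (fun z hz => by
        rw [Polynomial.map_id] at hz
        exact hroots_le z (Multiset.mem_of_mem_erase (hq_roots ▸ hz))) j
    rw [Polynomial.map_id] at h
    refine h.trans ?_
    rw [max_eq_left (by exact_mod_cast hB1 : (1:ℝ) ≤ (B:ℝ))]
    have hBn : ((B:ℝ)) ^ (n-1) = 2 * (s:ℝ) := by
      rw [← NNReal.coe_pow, hBpow]
      push_cast
      ring
    rw [hBn]
    have hs0 : (0:ℝ) ≤ 2 * (s:ℝ) := by positivity
    exact mul_le_mul_of_nonneg_left hchoose hs0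
  -- bound the coefficients of P
  have hpow : (2:ℝ) * (s:ℝ) * 2 ^ (n - 2) * 2 = 2 ^ n * (s:ℝ) := by
    have he : n - 2 + 2 = n := by omega
    calc (2:ℝ) * (s:ℝ) * 2 ^ (n - 2) * 2 = 2 ^ (n-2) * 2^2 * (s:ℝ) := by ring
      _ = 2 ^ n * (s:ℝ) := by rw [← pow_add, he]
  have hPc : ∀ k, ‖P.coeff k‖ ≤ 2 ^ n * (s:ℝ) := by
    intro k
    have hnn : (0:ℝ) ≤ 2 * (s:ℝ) * 2 ^ (n - 2) := by positivity
    cases k with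
    | zero =>
      rw [hPfact, Polynomial.mul_coeff_zero, norm_mul]
      have h1 : ‖(Polynomial.X - Polynomial.C z₀).coeff 0‖ ≤ 1 := by
        have h2 : (Polynomial.X - Polynomial.C z₀).coeff 0 = -z₀ := by simp
        rw [h2, norm_neg]
        exact hz₀norm
      calc ‖(Polynomial.X - Polynomial.C z₀).coeff 0‖ * ‖q.coeff 0‖
          ≤ 1 * (2 * (s:ℝ) * 2 ^ (n - 2)) :=
            mul_le_mul h1 (hqc 0) (norm_nonneg _) zero_le_one
        _ = 2 * (s:ℝ) * 2 ^ (n - 2) := one_mul _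
        _ ≤ 2 * (s:ℝ) * 2 ^ (n - 2) * 2 := le_mul_of_one_le_right hnn one_le_two
        _ = 2 ^ n * (s:ℝ) := hpow
    | succ k =>
      have hco : P.coeff (k+1) = q.coeff k - z₀ * q.coeff (k+1) := by
        rw [hPfact, sub_mul, Polynomial.coeff_sub, Polynomial.coeff_X_mul,
          Polynomial.coeff_C_mul]
      rw [hco]
      calc ‖q.coeff k - z₀ * q.coeff (k+1)‖ ≤ ‖q.coeff k‖ + ‖z₀‖ * ‖q.coeff (k+1)‖ := by
            refine (norm_sub_le _ _).trans ?_
            rw [norm_mul]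
        _ ≤ (2 * (s:ℝ) * 2 ^ (n - 2)) + 1 * (2 * (s:ℝ) * 2 ^ (n - 2)) := by
            refine add_le_add (hqc k) ?_
            exact mul_le_mul hz₀norm (hqc (k+1)) (norm_nonneg _) zero_le_one
        _ = 2 * (s:ℝ) * 2 ^ (n - 2) * 2 := by ring
        _ = 2 ^ n * (s:ℝ) := hpow
  -- conclusion
  set g : Polynomial ℤ := minpoly ℤ α with hg_def
  have hgp : p = g.map (algebraMap ℤ ℚ) := minpoly.isIntegrallyClosed_eq_field_fractions' ℚ hint
  have hPg : ∀ k, P.coeff k = ((g.coeff k : ℤ) : ℂ) := by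
    intro k
    rw [hP_def, hgp, Polynomial.coeff_map, Polynomial.coeff_map]
    simp
  have hgc : ∀ k, (((g.coeff k).natAbs : ℕ) : ℝ) ≤ 2 ^ n * (s:ℝ) := by
    intro k
    have h := hPc k
    rw [hPg k] at h
    have he : ‖((g.coeff k : ℤ) : ℂ)‖ = (((g.coeff k).natAbs : ℕ) : ℝ) := by
      rw [Complex.norm_intCast]
      simp [Nat.cast_natAbs, Int.cast_abs]
    rwa [he] at h
  have hsR : (s:ℝ) = Real.sqrt |(NumberField.discr K : ℝ)| := by
    rw [hs_def, Real.coe_sqrt, coe_nnnorm, Int.norm_eq_abs]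
  have hfinal : (polyHeight g : ℝ) ≤ 2 ^ n * Real.sqrt |(NumberField.discr K : ℝ)| := by
    rw [← hsR, polyHeight]
    obtain hsup | hsup := Finset.eq_empty_or_nonempty g.support
    · rw [hsup, Finset.sup_empty]
      simpa using (by positivity : (0:ℝ) ≤ 2 ^ n * (s:ℝ))
    · obtain ⟨i, _, hieq⟩ := Finset.exists_mem_eq_sup g.support hsup
        (fun i => (g.coeff i).natAbs)
      rw [hieq]
      exact hgc i
  exact ⟨α, hint, htop, hg_def ▸ hfinal⟩
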